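/- Thermodynamic limit of the multi-species mean-field pressure: for the Hamiltonian H_N(σ) = -N[(1/2)∑_{l,s=1}^n α_l α_s J_{ls} m_l(σ) m_s(σ) + ∑_l α_l h_l m_l(σ)] on {-1,1}^N with fixed proportions α_l = N_l/N, the pressure p_N = (1/N) log[(1/2^N) ∑_σ exp(-H_N(σ))] converges as N → ∞ (with α fixed) to max over x ∈ [-1,1]^n of f̄(x) = (1/2)∑_{l,s} α_l α_s J_{ls} x_l x_s + ∑_l α_l h_l x_l - ∑_l α_l 𝓘(x_l), where 𝓘(x) = ((1+x)log(1+x)+(1-x)log(1-x))/2. -/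

import Mathlib

open Real Filter Finset

noncomputable def entI14 (x : ℝ) : ℝ :=
  ((1 + x) * Real.log (1 + x) + (1 - x) * Real.log (1 - x)) / 2

/-- Spin value of a Boolean: `true ↦ 1`, `false ↦ -1`. -/
def spin14 (b : Bool) : ℝ := if b then 1 else -1

def cnt14 {M : ℕ} (f : Fin M → Bool) : ℕ := (univ.filter (fun i => f i = true)).card


private def tA (N k j : ℕ) : ℕ := N.choose j * k^j * (N-k)^(N-j)

lemma tA_sum (N k : ℕ) (hk : k ≤ N) : ∑ j ∈ range (N+1), tA N k j = N^N := by
  have := add_pow k (N - k) N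
  simp only [Nat.add_sub_cancel' hk] at this
  rw [this]
  refine Finset.sum_congr rfl fun j hj => ?_
  simp [tA]; ring

lemma tA_le (N k : ℕ) (hk : k ≤ N) : tA N k k ≤ N ^ N := by
  rw [← tA_sum N k hk]
  exact Finset.single_le_sum (fun j _ => Nat.zero_le _) (mem_range.mpr (by omega))

lemma tA_step (N k j : ℕ) (hj : j < k) (hk : k ≤ N) : tA N k j ≤ tA N k (j+1) := by
  rcases eq_or_lt_of_le hk with heq | hkN
  · subst heq
    have hz2 : tA k k j = 0 := by
      simp only [tA, Nat.sub_self]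
      rw [zero_pow (by omega : k - j ≠ 0), mul_zero]
    simp [hz2]
  · have hpos : 0 < (j+1) * (N-k) := Nat.mul_pos (Nat.succ_pos j) (Nat.sub_pos_of_lt hkN)
    refine Nat.le_of_mul_le_mul_right ?_ hpos
    have hjN : j < N := lt_of_lt_of_le hj hk
    have h1 : tA N k (j+1) * ((j+1) * (N-k)) = N.choose j * k^j * (N-k)^(N-j) * (k * (N-j)) := by
      have hc : N.choose (j+1) * (j+1) = N.choose j * (N - j) := Nat.choose_succ_right_eq N j
      have hpow : (N-k)^(N-(j+1)) * (N-k) = (N-k)^(N-j) := by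
        rw [← pow_succ]
        congr 1
        omega
      calc tA N k (j+1) * ((j+1) * (N-k))
          = (N.choose (j+1) * (j+1)) * (k^(j+1)) * ((N-k)^(N-(j+1)) * (N-k)) := by
            simp [tA]; ring
        _ = (N.choose j * (N-j)) * (k^(j+1)) * (N-k)^(N-j) := by rw [hc, hpow]
        _ = N.choose j * k^j * (N-k)^(N-j) * (k * (N-j)) := by ring
    rw [h1]
    have h2 : (j+1) * (N-k) ≤ k * (N-j) :=
      Nat.mul_le_mul hj (Nat.sub_le_sub_left (le_of_lt hj) N)
    calc tA N k j * ((j+1) * (N-k)) ≤ tA N k j * (k * (N-j)) := Nat.mul_le_mul_left _ h2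
      _ = N.choose j * k^j * (N-k)^(N-j) * (k * (N-j)) := rfl

lemma tA_mono (N k : ℕ) (hk : k ≤ N) : ∀ j, j ≤ k → tA N k j ≤ tA N k k := by
  have key : ∀ d, d ≤ k → tA N k (k - d) ≤ tA N k k := by
    intro d
    induction d with
    | zero => simp
    | succ d ih =>
      intro hd
      have h1 : k - (d+1) < k := by omega
      have h2 : k - (d+1) + 1 = k - d := by omega
      calc tA N k (k-(d+1)) ≤ tA N k (k-(d+1)+1) := tA_step N k _ h1 hk
        _ = tA N k (k-d) := by rw [h2]
        _ ≤ tA N k k := ih (by omega)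
  intro j hj
  have : j = k - (k - j) := by omega
  rw [this]
  exact key (k - j) (by omega)

lemma tA_symm (N k j : ℕ) (hk : k ≤ N) (hj : j ≤ N) : tA N k j = tA N (N-k) (N-j) := by
  simp only [tA]
  rw [Nat.choose_symm hj]
  have h1 : N - (N-k) = k := by omega
  have h2 : N - (N-j) = j := by omega
  rw [h1, h2]
  ring

lemma tA_max (N k j : ℕ) (hk : k ≤ N) (hj : j ≤ N) : tA N k j ≤ tA N k k := by
  rcases le_or_gt j k with hjk | hjk
  · exact tA_mono N k hk j hjk
  · rw [tA_symm N k j hk hj, tA_symm N k k hk hk]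
    exact tA_mono N (N-k) (Nat.sub_le N k) (N-j) (by omega)

lemma A2 (N k : ℕ) (hk : k ≤ N) : N^N ≤ (N+1) * (N.choose k * k^k * (N-k)^(N-k)) := by
  rw [← tA_sum N k hk]
  calc ∑ j ∈ range (N+1), tA N k j ≤ ∑ _j ∈ range (N+1), tA N k k :=
        Finset.sum_le_sum fun j hj => tA_max N k j hk (by simpa using Nat.lt_succ_iff.mp (mem_range.mp hj))
    _ = (N+1) * tA N k k := by simp [mul_comm]

lemma exp_nat_log (a : ℕ) (ha : 0 < a) : Real.exp ((a:ℝ) * Real.log a) = (a:ℝ)^a := by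
  rw [Real.exp_nat_mul, Real.exp_log (by positivity)]

lemma entI_compute (M j : ℕ) (h0 : 0 < j) (hjM : j < M) :
    Real.exp (-((M:ℝ) * entI14 ((2*j - M)/M))) * 2^M =
      (M:ℝ)^M / ((j:ℝ)^j * (((M - j : ℕ)):ℝ)^((M-j : ℕ))) := by
  have hM : 0 < M := lt_trans h0 hjM
  have hMR : (0:ℝ) < M := by exact_mod_cast hM
  have hjR : (0:ℝ) < j := by exact_mod_cast h0
  have hdR : (0:ℝ) < ((M - j : ℕ):ℝ) := by exact_mod_cast Nat.sub_pos_of_lt hjM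
  have hcast : ((M - j : ℕ):ℝ) = (M:ℝ) - j := by
    exact_mod_cast Nat.cast_sub hjM.le
  have hdR' : (0:ℝ) < (M:ℝ) - j := hcast ▸ hdR
  set μ : ℝ := (2*j - M)/M with hμ
  have e1 : (1:ℝ) + μ = 2*j/M := by rw [hμ]; field_simp; ring
  have e2 : (1:ℝ) - μ = 2*((M:ℝ)-j)/M := by rw [hμ]; field_simp; ring
  have l1 : Real.log (1 + μ) = Real.log 2 + Real.log j - Real.log M := by
    rw [e1, Real.log_div (by positivity) (by positivity), Real.log_mul (by norm_num) (by positivity)]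
  have l2 : Real.log (1 - μ) = Real.log 2 + Real.log ((M:ℝ)-j) - Real.log M := by
    rw [e2, Real.log_div (by positivity) (by positivity),
      Real.log_mul (by norm_num) (ne_of_gt hdR')]
  have key : (M:ℝ) * entI14 μ = (M:ℝ) * Real.log 2 + ((j:ℝ) * Real.log j
      + ((M:ℝ)-j) * Real.log ((M:ℝ)-j) - (M:ℝ) * Real.log M) := by
    rw [entI14, l1, l2, e1, e2]
    field_simp
    ring
  rw [key]
  have exp2 : Real.exp ((M:ℝ) * Real.log 2) = 2^M := by
    rw [Real.exp_nat_mul, Real.exp_log (by norm_num)]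
  have expM : Real.exp ((M:ℝ) * Real.log M) = (M:ℝ)^M := exp_nat_log M hM
  have expj : Real.exp ((j:ℝ) * Real.log j) = (j:ℝ)^j := exp_nat_log j h0
  have expd : Real.exp (((M:ℝ)-j) * Real.log ((M:ℝ)-j)) = ((M - j:ℕ):ℝ)^((M-j:ℕ)) := by
    rw [← hcast]; exact exp_nat_log (M-j) (Nat.sub_pos_of_lt hjM)
  have expand : -((M:ℝ) * Real.log 2 + ((j:ℝ) * Real.log j + ((M:ℝ)-j) * Real.log ((M:ℝ)-j)
        - (M:ℝ) * Real.log M))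
      = (M:ℝ) * Real.log M + (-((M:ℝ) * Real.log 2)
        + (-((j:ℝ) * Real.log j) + -(((M:ℝ)-j) * Real.log ((M:ℝ)-j)))) := by ring
  rw [expand, Real.exp_add, Real.exp_add, Real.exp_add, Real.exp_neg, Real.exp_neg,
    Real.exp_neg, exp2, expM, expj, expd]
  have h1 : ((j:ℝ)^j) ≠ 0 := by positivity
  have h2 : (((M-j:ℕ)):ℝ)^((M-j:ℕ)) ≠ 0 := by positivity
  have h3 : ((2:ℝ)^M) ≠ 0 := by positivity
  field_simp

lemma entI_edge0 (M : ℕ) (hM : 0 < M) :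
    Real.exp (-((M:ℝ) * entI14 ((2*(0:ℕ) - M)/M))) * 2^M = 1 := by
  have hMR : (0:ℝ) < M := by exact_mod_cast hM
  have hμ : (2*((0:ℕ):ℝ) - M)/M = -1 := by field_simp; simp
  rw [hμ]
  have he : entI14 (-1) = Real.log 2 := by
    simp [entI14]
    norm_num
  rw [he, Real.exp_neg, Real.exp_nat_mul, Real.exp_log (by norm_num)]
  field_simp

lemma entI_edgeM (M : ℕ) (hM : 0 < M) :
    Real.exp (-((M:ℝ) * entI14 ((2*(M:ℝ) - M)/M))) * 2^M = 1 := by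
  have hMR : (0:ℝ) < M := by exact_mod_cast hM
  have hμ : (2*(M:ℝ) - M)/M = 1 := by field_simp; ring
  rw [hμ]
  have he : entI14 1 = Real.log 2 := by
    simp [entI14]
    norm_num
  rw [he, Real.exp_neg, Real.exp_nat_mul, Real.exp_log (by norm_num)]
  field_simp

lemma choose_le_ent (M j : ℕ) (hM : 0 < M) (hj : j ≤ M) :
    (M.choose j : ℝ) ≤ Real.exp (-((M:ℝ) * entI14 ((2*(j:ℝ) - M)/M))) * 2^M := by
  rcases Nat.eq_zero_or_pos j with rfl | h0
  · rw [show ((0:ℕ):ℝ) = ((0:ℕ):ℝ) from rfl]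
    rw [entI_edge0 M hM]
    simp
  rcases eq_or_lt_of_le hj with heq | hjM
  · subst heq
    rw [entI_edgeM j hM]
    simp
  · rw [entI_compute M j h0 hjM]
    have hA := tA_le M j hj
    rw [show tA M j j = M.choose j * j^j * (M-j)^(M-j) from rfl] at hA
    have hAc : ((M.choose j : ℝ)) * ((j:ℝ)^j * ((M-j:ℕ):ℝ)^(M-j:ℕ)) ≤ (M:ℝ)^M := by
      have := (Nat.cast_le (α := ℝ)).mpr hA
      push_cast at this
      nlinarith [this]
    have hd : (0:ℝ) < ((M-j:ℕ):ℝ) := by exact_mod_cast Nat.sub_pos_of_lt hjM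
    rw [le_div_iff₀ (mul_pos (by positivity) (pow_pos hd _))]
    exact hAc

lemma ent_le_choose (M j : ℕ) (hM : 0 < M) (hj : j ≤ M) :
    Real.exp (-((M:ℝ) * entI14 ((2*(j:ℝ) - M)/M))) * 2^M ≤ ((M:ℝ)+1) * (M.choose j : ℝ) := by
  rcases Nat.eq_zero_or_pos j with rfl | h0
  · rw [show ((0:ℕ):ℝ) = ((0:ℕ):ℝ) from rfl, entI_edge0 M hM]
    simp
  rcases eq_or_lt_of_le hj with heq | hjM
  · subst heq
    rw [entI_edgeM j hM]
    simp
  · rw [entI_compute M j h0 hjM]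
    have hA := A2 M j hj
    have hAc : (M:ℝ)^M ≤ ((M:ℝ)+1) * ((M.choose j : ℝ) * ((j:ℝ)^j * ((M-j:ℕ):ℝ)^(M-j:ℕ))) := by
      have := (Nat.cast_le (α := ℝ)).mpr hA
      push_cast at this
      nlinarith [this]
    have hd : (0:ℝ) < ((M-j:ℕ):ℝ) := by exact_mod_cast Nat.sub_pos_of_lt hjM
    rw [div_le_iff₀ (mul_pos (by positivity) (pow_pos hd _))]
    nlinarith [hAc]

-- Part C

lemma cnt14_le {M : ℕ} (f : Fin M → Bool) : cnt14 f ≤ M := by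
  simpa [cnt14] using (Finset.card_filter_le univ (fun i => f i = true))

lemma card_cnt (M j : ℕ) : Fintype.card {f : Fin M → Bool // cnt14 f = j} = M.choose j := by
  have e : {f : Fin M → Bool // cnt14 f = j} ≃ {s : Finset (Fin M) // s.card = j} :=
    { toFun := fun f => ⟨univ.filter (fun i => f.1 i = true), f.2⟩
      invFun := fun s => ⟨fun i => decide (i ∈ s.1), by
        simp [cnt14, Finset.filter_mem_eq_inter, s.2]⟩
      left_inv := fun f => Subtype.ext (funext fun i => by simp)
      right_inv := fun s => Subtype.ext (by ext i; simp) }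
  rw [Fintype.card_congr e, Fintype.card_finset_len]
  simp

lemma card_fiber {n : ℕ} (Nn K : Fin n → ℕ) :
    (univ.filter (fun σ : ∀ l, Fin (Nn l) → Bool => ∀ l, cnt14 (σ l) = K l)).card
      = ∏ l, (Nn l).choose (K l) := by
  rw [← Fintype.card_subtype, Fintype.card_congr (Equiv.subtypePiEquivPi (p := fun l (f : Fin (Nn l) → Bool) => cnt14 f = K l)), Fintype.card_pi]
  exact Finset.prod_congr rfl fun l _ => card_cnt _ _

lemma spin_sum {M : ℕ} (f : Fin M → Bool) :
    ∑ i, spin14 (f i) = 2 * (cnt14 f : ℝ) - M := by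
  have hsplit := Finset.card_filter_add_card_filter_not
    (s := (univ : Finset (Fin M))) (p := fun i => f i = true)
  simp only [Finset.card_univ, Fintype.card_fin] at hsplit
  rw [show (fun i => spin14 (f i)) = fun i => if f i = true then (1:ℝ) else -1 by
    funext i; simp [spin14]]
  rw [Finset.sum_ite]
  simp only [Finset.sum_const, nsmul_eq_mul, mul_one, mul_neg]
  rw [cnt14]
  have : ((univ.filter (fun i => ¬ f i = true)).card : ℝ)
      = M - ((univ.filter (fun i => f i = true)).card : ℝ) := by
    have := hsplit
    push_cast [← this]
    ring
  rw [this]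
  ring


set_option maxHeartbeats 1600000 in
theorem stmt_14 (n : ℕ) (J : Matrix (Fin n) (Fin n) ℝ) (hJsymm : J.IsSymm)
    (h α : Fin n → ℝ) (hα : ∀ l, 0 < α l) (hαsum : ∑ l, α l = 1)
    -- sizes of the groups along the sequence of systems, with exact proportions α
    (Nl : ℕ → Fin n → ℕ) (Ntot : ℕ → ℕ)
    (hNtot : ∀ k, Ntot k = ∑ l, Nl k l)
    (hprop : ∀ k l, (Nl k l : ℝ) = α l * Ntot k)
    (hNinf : Tendsto Ntot atTop atTop)
    -- magnetization of group `l` in configuration `σ`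
    (m : ∀ k : ℕ, (∀ l : Fin n, Fin (Nl k l) → Bool) → Fin n → ℝ)
    (hm : ∀ k σ l, m k σ l = (∑ i, spin14 (σ l i)) / (Nl k l : ℝ))
    -- minus Hamiltonian divided by N, as a function of the magnetizations
    (g : (Fin n → ℝ) → ℝ)
    (hg : ∀ x, g x = (1 / 2) * ∑ l, ∑ s, α l * α s * J l s * x l * x s +
        ∑ l, α l * h l * x l)
    (fbar : (Fin n → ℝ) → ℝ)
    (hfbar : ∀ x, fbar x = g x - ∑ l, α l * entI14 (x l))
    -- the finite-volume pressure
    (p : ℕ → ℝ)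
    (hp : ∀ k, p k = (1 / (Ntot k : ℝ)) *
        Real.log ((1 / 2 ^ Ntot k) *
          ∑ σ : ∀ l : Fin n, Fin (Nl k l) → Bool, Real.exp ((Ntot k : ℝ) * g (m k σ)))) :
    Tendsto p atTop
      (nhds (sSup (fbar '' Set.Icc (fun _ => (-1 : ℝ)) (fun _ => 1)))) := by
  -- n is positive
  have hn : 0 < n := by
    rcases Nat.eq_zero_or_pos n with rfl | hn
    · simp at hαsum
    · exact hn
  have hnemp : Nonempty (Fin n) := ⟨⟨0, hn⟩⟩
  have hα1 : ∀ l, α l ≤ 1 := by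
    intro l
    rw [← hαsum]
    exact Finset.single_le_sum (fun i _ => (hα i).le) (mem_univ l)
  -- continuity of fbar
  have hent : Continuous entI14 := by
    have h1 : Continuous fun x : ℝ => (1+x) * Real.log (1+x) :=
      Real.continuous_mul_log.comp (continuous_const.add continuous_id)
    have h2 : Continuous fun x : ℝ => (1-x) * Real.log (1-x) :=
      Real.continuous_mul_log.comp (continuous_const.sub continuous_id)
    exact (h1.add h2).div_const 2
  have hcont : Continuous fbar := by
    have hfb : fbar = fun x => ((1 / 2) * ∑ l, ∑ s, α l * α s * J l s * x l * x s +
        ∑ l, α l * h l * x l) - ∑ l, α l * entI14 (x l) := by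
      funext x; rw [hfbar, hg]
    rw [hfb]
    apply Continuous.sub
    · apply Continuous.add
      · apply Continuous.mul continuous_const
        apply continuous_finset_sum
        intro l _
        apply continuous_finset_sum
        intro s _
        exact (continuous_const.mul (continuous_apply l)).mul (continuous_apply s)
      · apply continuous_finset_sum
        intro l _
        exact continuous_const.mul (continuous_apply l)
    · apply continuous_finset_sum
      intro l _
      exact continuous_const.mul (hent.comp (continuous_apply l))
  -- the maximizer
  have hIcc : IsCompact (Set.Icc (fun _ : Fin n => (-1:ℝ)) (fun _ => (1:ℝ))) := isCompact_Icc
  have hne : (Set.Icc (fun _ : Fin n => (-1:ℝ)) (fun _ => (1:ℝ))).Nonempty := by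
    refine ⟨fun _ => 0, ?_, ?_⟩ <;> intro l <;> norm_num
  obtain ⟨xs, hxsmem, hxsmax⟩ := hIcc.exists_isMaxOn hne hcont.continuousOn
  have hbdd : ∀ y ∈ Set.Icc (fun _ : Fin n => (-1:ℝ)) (fun _ => (1:ℝ)), fbar y ≤ fbar xs :=
    fun y hy => hxsmax hy
  have hS : sSup (fbar '' Set.Icc (fun _ : Fin n => (-1 : ℝ)) (fun _ => 1)) = fbar xs := by
    apply le_antisymm
    · apply csSup_le (hne.image _)
      rintro _ ⟨y, hy, rfl⟩
      exact hbdd y hy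
    · refine le_csSup ⟨fbar xs, ?_⟩ ⟨xs, hxsmem, rfl⟩
      rintro _ ⟨y, hy, rfl⟩
      exact hbdd y hy
  rw [hS]
  set S := fbar xs with hSdef
  -- per-k bounds
  have key : ∀ k, 1 ≤ Ntot k → ∀ K : Fin n → ℕ, (∀ l, K l ≤ Nl k l) →
      fbar (fun l => (2*(K l:ℝ) - (Nl k l:ℝ))/(Nl k l:ℝ))
          - n * Real.log ((Ntot k:ℝ)+1) / (Ntot k:ℝ) ≤ p k ∧
      p k ≤ S + n * Real.log ((Ntot k:ℝ)+1) / (Ntot k:ℝ) := by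
    intro k hk1 K hK
    have hNR : (0:ℝ) < (Ntot k:ℝ) := by exact_mod_cast hk1
    have h2N : (0:ℝ) < 2^(Ntot k) := by positivity
    have hNlposR : ∀ l, (0:ℝ) < (Nl k l : ℝ) := fun l => by
      rw [hprop k l]; exact mul_pos (hα l) hNR
    have hNlpos : ∀ l, 0 < Nl k l := fun l => by exact_mod_cast hNlposR l
    have hNlleN : ∀ l, (Nl k l : ℝ) ≤ (Ntot k:ℝ) := fun l => by
      rw [hprop k l]; nlinarith [hα1 l, hNR, hα l]
    have hsumNl : ∑ l, Nl k l = Ntot k := (hNtot k).symm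
    -- the magnetization map on counts
    set mu : (Fin n → ℕ) → (Fin n → ℝ) :=
      fun K l => (2*(K l : ℝ) - (Nl k l:ℝ))/(Nl k l : ℝ) with hmu
    have hmuval : ∀ (K' : Fin n → ℕ) l, mu K' l = (2*(K' l : ℝ) - (Nl k l:ℝ))/(Nl k l : ℝ) :=
      fun _ _ => rfl
    have hmμ : ∀ σ, m k σ = mu (fun l => cnt14 (σ l)) := by
      intro σ
      funext l
      rw [hm k σ l, spin_sum (σ l)]
    have hmuIcc : ∀ K' : Fin n → ℕ, (∀ l, K' l ≤ Nl k l) →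
        mu K' ∈ Set.Icc (fun _ : Fin n => (-1:ℝ)) (fun _ => (1:ℝ)) := by
      intro K' hK'
      constructor <;> intro l <;>
        simp only [hmuval]
      · show (-1:ℝ) ≤ (2*(K' l : ℝ) - (Nl k l:ℝ))/(Nl k l : ℝ)
        rw [le_div_iff₀ (hNlposR l)]
        have : (0:ℝ) ≤ (K' l : ℝ) := Nat.cast_nonneg _
        nlinarith
      · show (2*(K' l : ℝ) - (Nl k l:ℝ))/(Nl k l : ℝ) ≤ 1
        rw [div_le_one (hNlposR l)]
        have : (K' l : ℝ) ≤ (Nl k l : ℝ) := by exact_mod_cast hK' l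
        nlinarith
    -- product bound
    have hprodbound : ∀ K' : Fin n → ℕ, (∀ l, K' l ≤ Nl k l) →
        ((∏ l, ((Nl k l).choose (K' l) : ℝ)) * Real.exp ((Ntot k:ℝ) * g (mu K'))
          ≤ 2^(Ntot k) * Real.exp ((Ntot k:ℝ) * fbar (mu K'))) ∧
        (2^(Ntot k) * Real.exp ((Ntot k:ℝ) * fbar (mu K'))
          ≤ ((Ntot k:ℝ)+1)^n * ((∏ l, ((Nl k l).choose (K' l) : ℝ))
              * Real.exp ((Ntot k:ℝ) * g (mu K')))) := by
      intro K' hK'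
      have hEl : ∏ l, (Real.exp (-((Nl k l:ℝ) * entI14 (mu K' l))) * 2^(Nl k l))
          = Real.exp (-((Ntot k:ℝ) * ∑ l, α l * entI14 (mu K' l))) * 2^(Ntot k) := by
        rw [Finset.prod_mul_distrib, ← Real.exp_sum, Finset.prod_pow_eq_pow_sum, hsumNl]
        congr 1
        rw [Real.exp_eq_exp, Finset.mul_sum, ← Finset.sum_neg_distrib]
        exact Finset.sum_congr rfl fun l _ => by rw [hprop k l]; ring
      have hexp_split : Real.exp ((Ntot k:ℝ) * fbar (mu K'))
          = Real.exp (-((Ntot k:ℝ) * ∑ l, α l * entI14 (mu K' l)))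
              * Real.exp ((Ntot k:ℝ) * g (mu K')) := by
        rw [← Real.exp_add]
        congr 1
        rw [hfbar (mu K')]
        ring
      constructor
      · have h1 : ∏ l, ((Nl k l).choose (K' l) : ℝ)
            ≤ ∏ l, (Real.exp (-((Nl k l:ℝ) * entI14 (mu K' l))) * 2^(Nl k l)) := by
          apply Finset.prod_le_prod (fun l _ => by positivity)
          intro l _
          have hb := choose_le_ent (Nl k l) (K' l) (hNlpos l) (hK' l)
          rw [← hmuval K' l] at hb
          exact hb
        calc (∏ l, ((Nl k l).choose (K' l) : ℝ)) * Real.exp ((Ntot k:ℝ) * g (mu K'))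
            ≤ (∏ l, (Real.exp (-((Nl k l:ℝ) * entI14 (mu K' l))) * 2^(Nl k l)))
                * Real.exp ((Ntot k:ℝ) * g (mu K')) :=
              mul_le_mul_of_nonneg_right h1 (Real.exp_pos _).le
          _ = 2^(Ntot k) * Real.exp ((Ntot k:ℝ) * fbar (mu K')) := by
              rw [hEl, hexp_split]; ring
      · have h1 : ∏ l, (Real.exp (-((Nl k l:ℝ) * entI14 (mu K' l))) * 2^(Nl k l))
            ≤ ∏ l, (((Nl k l:ℝ)+1) * ((Nl k l).choose (K' l) : ℝ)) := by
          apply Finset.prod_le_prod (fun l _ => by positivity)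
          intro l _
          have hb := ent_le_choose (Nl k l) (K' l) (hNlpos l) (hK' l)
          rw [← hmuval K' l] at hb
          exact hb
        have h2 : (∏ l, ((Nl k l:ℝ)+1)) ≤ ((Ntot k:ℝ)+1)^n := by
          calc ∏ l, ((Nl k l:ℝ)+1) ≤ ∏ _l : Fin n, ((Ntot k:ℝ)+1) :=
                Finset.prod_le_prod (fun l _ => by positivity)
                  (fun l _ => by linarith [hNlleN l])
            _ = ((Ntot k:ℝ)+1)^n := by
                rw [Finset.prod_const, Finset.card_univ, Fintype.card_fin]
        calc 2^(Ntot k) * Real.exp ((Ntot k:ℝ) * fbar (mu K'))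
            = (∏ l, (Real.exp (-((Nl k l:ℝ) * entI14 (mu K' l))) * 2^(Nl k l)))
                * Real.exp ((Ntot k:ℝ) * g (mu K')) := by rw [hEl, hexp_split]; ring
          _ ≤ (∏ l, (((Nl k l:ℝ)+1) * ((Nl k l).choose (K' l) : ℝ)))
                * Real.exp ((Ntot k:ℝ) * g (mu K')) :=
              mul_le_mul_of_nonneg_right h1 (Real.exp_pos _).le
          _ = (∏ l, ((Nl k l:ℝ)+1)) * ((∏ l, ((Nl k l).choose (K' l) : ℝ))
                * Real.exp ((Ntot k:ℝ) * g (mu K'))) := by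
              rw [Finset.prod_mul_distrib]; ring
          _ ≤ ((Ntot k:ℝ)+1)^n * ((∏ l, ((Nl k l).choose (K' l) : ℝ))
                * Real.exp ((Ntot k:ℝ) * g (mu K'))) :=
              mul_le_mul_of_nonneg_right h2 (by positivity)
    -- the partition function
    set cfun : (∀ l : Fin n, Fin (Nl k l) → Bool) → (Fin n → ℕ) :=
      fun σ l => cnt14 (σ l) with hcfun
    set Z := ∑ σ : ∀ l : Fin n, Fin (Nl k l) → Bool,
      Real.exp ((Ntot k:ℝ) * g (m k σ)) with hZdef
    have hZpos : 0 < Z := Finset.sum_pos (fun σ _ => Real.exp_pos _) univ_nonempty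
    have hZ1 : Z = ∑ σ : ∀ l : Fin n, Fin (Nl k l) → Bool,
        Real.exp ((Ntot k:ℝ) * g (mu (cfun σ))) := by
      rw [hZdef]
      exact Finset.sum_congr rfl fun σ _ => by rw [hmμ σ]
    have hcardeq : ∀ K' : Fin n → ℕ,
        ((univ.filter (fun σ : ∀ l : Fin n, Fin (Nl k l) → Bool => cfun σ = K')).card : ℕ)
          = ∏ l, (Nl k l).choose (K' l) := by
      intro K'
      rw [← card_fiber (fun l => Nl k l) K']
      congr 1
      apply Finset.filter_congr
      intro σ _
      constructor
      · intro hh l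
        exact congrFun hh l
      · intro hh
        funext l
        exact hh l
    have hZ2 : Z = ∑ K' ∈ univ.image cfun,
        (((univ.filter (fun σ => cfun σ = K')).card : ℝ)
          * Real.exp ((Ntot k:ℝ) * g (mu K'))) := by
      rw [hZ1, Finset.sum_comp (fun K' => Real.exp ((Ntot k:ℝ) * g (mu K'))) cfun]
      exact Finset.sum_congr rfl fun K' _ => by rw [nsmul_eq_mul]
    -- image cardinality bound
    have himgcard : ((univ.image cfun).card : ℝ) ≤ ((Ntot k:ℝ)+1)^n := by
      have h1 : (univ.image cfun).card ≤ ∏ l, (Nl k l + 1) := by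
        calc (univ.image cfun).card
            ≤ (Fintype.piFinset (fun l => Finset.range (Nl k l + 1))).card := by
              apply Finset.card_le_card
              intro K' hK'
              obtain ⟨σ0, _, rfl⟩ := Finset.mem_image.mp hK'
              rw [Fintype.mem_piFinset]
              intro l
              rw [Finset.mem_range]
              exact Nat.lt_succ_of_le (cnt14_le (σ0 l))
          _ = ∏ l, (Nl k l + 1) := by
              rw [Fintype.card_piFinset]
              simp
      have h2 : ∏ l, (Nl k l + 1) ≤ (Ntot k + 1)^n := by
        calc ∏ l, (Nl k l + 1) ≤ ∏ _l : Fin n, (Ntot k + 1) := by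
              apply Finset.prod_le_prod'
              intro l _
              have := hNlleN l
              have : Nl k l ≤ Ntot k := by exact_mod_cast this
              omega
          _ = (Ntot k + 1)^n := by
              rw [Finset.prod_const, Finset.card_univ, Fintype.card_fin]
      calc ((univ.image cfun).card : ℝ) ≤ ((∏ l, (Nl k l + 1) : ℕ) : ℝ) := by
            exact_mod_cast h1
        _ ≤ (((Ntot k + 1)^n : ℕ) : ℝ) := by exact_mod_cast h2
        _ = ((Ntot k:ℝ)+1)^n := by push_cast; ring
    -- upper bound on Z
    have hZub : Z ≤ ((Ntot k:ℝ)+1)^n * (2^(Ntot k) * Real.exp ((Ntot k:ℝ) * S)) := by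
      rw [hZ2]
      have hterm : ∀ K' ∈ univ.image cfun,
          ((univ.filter (fun σ => cfun σ = K')).card : ℝ)
            * Real.exp ((Ntot k:ℝ) * g (mu K'))
          ≤ 2^(Ntot k) * Real.exp ((Ntot k:ℝ) * S) := by
        intro K' hK'
        obtain ⟨σ0, _, rfl⟩ := Finset.mem_image.mp hK'
        have hle : ∀ l, cfun σ0 l ≤ Nl k l := fun l => cnt14_le (σ0 l)
        have hb1 := (hprodbound (cfun σ0) hle).1
        have hcast : ((univ.filter (fun σ => cfun σ = cfun σ0)).card : ℝ)
            = ∏ l, ((Nl k l).choose (cfun σ0 l) : ℝ) := by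
          rw [hcardeq (cfun σ0)]
          push_cast
          rfl
        rw [hcast]
        refine le_trans hb1 ?_
        have hfle : fbar (mu (cfun σ0)) ≤ S := hbdd _ (hmuIcc _ hle)
        have hexp : Real.exp ((Ntot k:ℝ) * fbar (mu (cfun σ0)))
            ≤ Real.exp ((Ntot k:ℝ) * S) :=
          Real.exp_le_exp.mpr (mul_le_mul_of_nonneg_left hfle hNR.le)
        exact mul_le_mul_of_nonneg_left hexp h2N.le
      calc ∑ K' ∈ univ.image cfun, (((univ.filter (fun σ => cfun σ = K')).card : ℝ)
            * Real.exp ((Ntot k:ℝ) * g (mu K')))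
          ≤ ∑ _K' ∈ univ.image cfun, 2^(Ntot k) * Real.exp ((Ntot k:ℝ) * S) :=
            Finset.sum_le_sum hterm
        _ = ((univ.image cfun).card : ℝ) * (2^(Ntot k) * Real.exp ((Ntot k:ℝ) * S)) := by
            rw [Finset.sum_const, nsmul_eq_mul]
        _ ≤ ((Ntot k:ℝ)+1)^n * (2^(Ntot k) * Real.exp ((Ntot k:ℝ) * S)) :=
            mul_le_mul_of_nonneg_right himgcard (by positivity)
    -- lower bound on Z
    have hZlb : (∏ l, ((Nl k l).choose (K l):ℝ)) * Real.exp ((Ntot k:ℝ) * g (mu K)) ≤ Z := by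
      rw [hZ1]
      have e1 : (∏ l, ((Nl k l).choose (K l):ℝ)) * Real.exp ((Ntot k:ℝ) * g (mu K))
          = ∑ σ ∈ univ.filter (fun σ => cfun σ = K),
              Real.exp ((Ntot k:ℝ) * g (mu (cfun σ))) := by
        rw [Finset.sum_congr rfl (fun σ hσ => by
          rw [(Finset.mem_filter.mp hσ).2])]
        rw [Finset.sum_const, nsmul_eq_mul, hcardeq K]
        push_cast
        rfl
      rw [e1]
      exact Finset.sum_le_sum_of_subset_of_nonneg (Finset.filter_subset _ _)
        (fun σ _ _ => (Real.exp_pos _).le)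
    constructor
    · -- lower bound on p k
      rw [hp k]
      have h3 : 2^(Ntot k) * Real.exp ((Ntot k:ℝ) * fbar (mu K)) ≤ ((Ntot k:ℝ)+1)^n * Z :=
        le_trans (hprodbound K hK).2 (mul_le_mul_of_nonneg_left hZlb (by positivity))
      have hQpos : (0:ℝ) < ((Ntot k:ℝ)+1)^n := by positivity
      have hdivle : Real.exp ((Ntot k:ℝ) * fbar (mu K)) / ((Ntot k:ℝ)+1)^n
          ≤ (1/2^(Ntot k)) * Z := by
        rw [div_le_iff₀ hQpos]
        have hmm := mul_le_mul_of_nonneg_left h3 (le_of_lt (one_div_pos.mpr h2N))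
        calc Real.exp ((Ntot k:ℝ) * fbar (mu K))
            = (1/2^(Ntot k)) * (2^(Ntot k) * Real.exp ((Ntot k:ℝ) * fbar (mu K))) := by
              field_simp
          _ ≤ (1/2^(Ntot k)) * (((Ntot k:ℝ)+1)^n * Z) := hmm
          _ = (1/2^(Ntot k)) * Z * ((Ntot k:ℝ)+1)^n := by ring
      have hlog : (Ntot k:ℝ) * fbar (mu K) - n * Real.log ((Ntot k:ℝ)+1)
          ≤ Real.log ((1/2^(Ntot k)) * Z) := by
        have hpos1 : (0:ℝ) < Real.exp ((Ntot k:ℝ) * fbar (mu K)) / ((Ntot k:ℝ)+1)^n :=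
          div_pos (Real.exp_pos _) hQpos
        calc (Ntot k:ℝ) * fbar (mu K) - n * Real.log ((Ntot k:ℝ)+1)
            = Real.log (Real.exp ((Ntot k:ℝ) * fbar (mu K)) / ((Ntot k:ℝ)+1)^n) := by
              rw [Real.log_div (Real.exp_ne_zero _) (ne_of_gt hQpos), Real.log_exp,
                Real.log_pow]
          _ ≤ Real.log ((1/2^(Ntot k)) * Z) := Real.log_le_log hpos1 hdivle
      have hfinal := mul_le_mul_of_nonneg_left hlog (le_of_lt (one_div_pos.mpr hNR))
      have heq : (1/(Ntot k:ℝ)) * ((Ntot k:ℝ) * fbar (mu K) - n * Real.log ((Ntot k:ℝ)+1))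
          = fbar (mu K) - n * Real.log ((Ntot k:ℝ)+1) / (Ntot k:ℝ) := by
        field_simp
      have hmueq : (fun l => (2*(K l:ℝ) - (Nl k l:ℝ))/(Nl k l:ℝ)) = mu K := by
        funext l; rw [hmuval]
      rw [hmueq]
      linarith [hfinal, heq ▸ hfinal]
    · -- upper bound on p k
      rw [hp k]
      have hmul : (1/2^(Ntot k)) * Z ≤ ((Ntot k:ℝ)+1)^n * Real.exp ((Ntot k:ℝ) * S) := by
        have hmm := mul_le_mul_of_nonneg_left hZub (le_of_lt (one_div_pos.mpr h2N))
        calc (1/2^(Ntot k)) * Z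
            ≤ (1/2^(Ntot k)) * (((Ntot k:ℝ)+1)^n * (2^(Ntot k) * Real.exp ((Ntot k:ℝ) * S))) :=
              hmm
          _ = ((Ntot k:ℝ)+1)^n * Real.exp ((Ntot k:ℝ) * S) := by
              field_simp
      have hlog : Real.log ((1/2^(Ntot k)) * Z)
          ≤ n * Real.log ((Ntot k:ℝ)+1) + (Ntot k:ℝ) * S := by
        calc Real.log ((1/2^(Ntot k)) * Z)
            ≤ Real.log (((Ntot k:ℝ)+1)^n * Real.exp ((Ntot k:ℝ) * S)) :=
              Real.log_le_log (mul_pos (one_div_pos.mpr h2N) hZpos) hmul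
          _ = n * Real.log ((Ntot k:ℝ)+1) + (Ntot k:ℝ) * S := by
              rw [Real.log_mul (by positivity) (Real.exp_ne_zero _), Real.log_pow,
                Real.log_exp]
      have hfinal := mul_le_mul_of_nonneg_left hlog (le_of_lt (one_div_pos.mpr hNR))
      have heq : (1/(Ntot k:ℝ)) * (n * Real.log ((Ntot k:ℝ)+1) + (Ntot k:ℝ) * S)
          = S + n * Real.log ((Ntot k:ℝ)+1) / (Ntot k:ℝ) := by
        field_simp
        ring
      linarith [hfinal, heq ▸ hfinal]
  -- the error term tends to 0
  have htN : Tendsto (fun k => (Ntot k : ℝ)) atTop atTop :=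
    tendsto_natCast_atTop_atTop.comp hNinf
  have hlogtend : Tendsto (fun k => (n:ℝ) * Real.log ((Ntot k:ℝ)+1) / (Ntot k:ℝ))
      atTop (nhds 0) := by
    have l0 : Tendsto (fun x : ℝ => Real.log x / x) atTop (nhds 0) :=
      Real.isLittleO_log_id_atTop.tendsto_div_nhds_zero
    have l1 : Tendsto (fun x : ℝ => Real.log (x+1) / (x+1)) atTop (nhds 0) :=
      l0.comp (tendsto_atTop_add_const_right atTop 1 tendsto_id)
    have l2 : Tendsto (fun x : ℝ => (x+1)/x) atTop (nhds 1) := by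
      have heq : (fun x:ℝ => (x+1)/x) =ᶠ[atTop] fun x => 1 + x⁻¹ := by
        filter_upwards [eventually_gt_atTop (0:ℝ)] with x hx
        field_simp
      rw [tendsto_congr' heq]
      have := tendsto_const_nhds (α := ℝ) (f := atTop) (x := (1:ℝ))
      simpa using this.add tendsto_inv_atTop_zero
    have l3 : Tendsto (fun x : ℝ => Real.log (x+1)/x) atTop (nhds 0) := by
      have heq : (fun x : ℝ => Real.log (x+1)/x)
          =ᶠ[atTop] fun x => (Real.log (x+1)/(x+1)) * ((x+1)/x) := by
        filter_upwards [eventually_gt_atTop (0:ℝ)] with x hx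
        have hx1 : x + 1 ≠ 0 := by linarith
        field_simp
      rw [tendsto_congr' heq]
      simpa using l1.mul l2
    have l4 := (l3.comp htN).const_mul (n:ℝ)
    simp only [Function.comp] at l4
    simpa [mul_div_assoc, mul_zero] using l4
  -- minimum of α
  obtain ⟨l₀, -, hl₀⟩ := Finset.exists_min_image univ α ⟨⟨0,hn⟩, mem_univ _⟩
  set a0 := α l₀ with ha0def
  have ha0pos : 0 < a0 := hα l₀
  have ha0le : ∀ l, a0 ≤ α l := fun l => hl₀ l (mem_univ l)
  -- conclude via order topology
  refine tendsto_order.2 ⟨?_, ?_⟩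
  · intro a ha
    have hc := Metric.continuousAt_iff.mp (hcont.continuousAt (x := xs)) ((S - a)/2) (by linarith)
    obtain ⟨δ, hδ, hδim⟩ := hc
    have hev1 : ∀ᶠ k in atTop, (2/(a0*δ) : ℝ) < (Ntot k:ℝ) := htN.eventually_gt_atTop _
    have hev2 : ∀ᶠ k in atTop, 1 ≤ Ntot k := hNinf.eventually_ge_atTop 1
    have hev3 : ∀ᶠ k in atTop, (n:ℝ) * Real.log ((Ntot k:ℝ)+1)/(Ntot k:ℝ) < (S-a)/2 :=
      hlogtend.eventually_lt_const (by linarith)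
    filter_upwards [hev1, hev2, hev3] with k h1 h2 h3
    have hNR : (0:ℝ) < (Ntot k:ℝ) := by
      exact_mod_cast h2
    have hNlposR : ∀ l, (0:ℝ) < (Nl k l:ℝ) := fun l => by
      rw [hprop k l]; exact mul_pos (hα l) hNR
    set Kst : Fin n → ℕ := fun l => min (Nl k l) (Nat.floor (((1 + xs l)/2) * (Nl k l:ℝ)))
      with hKst
    have hKle : ∀ l, Kst l ≤ Nl k l := fun l => min_le_left _ _
    have hkey := (key k h2 Kst hKle).1
    have hxs1 : ∀ l, (-1:ℝ) ≤ xs l := fun l => hxsmem.1 l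
    have hxs2 : ∀ l, xs l ≤ 1 := fun l => hxsmem.2 l
    have hmudist : ∀ l, |(2*(Kst l:ℝ) - (Nl k l:ℝ))/(Nl k l:ℝ) - xs l| ≤ 2/(Nl k l:ℝ) := by
      intro l
      have hq0 : (0:ℝ) ≤ (1 + xs l)/2 := by linarith [hxs1 l]
      have hq1 : (1 + xs l)/2 ≤ 1 := by linarith [hxs2 l]
      have hfl : Kst l = Nat.floor (((1 + xs l)/2) * (Nl k l:ℝ)) := by
        rw [hKst]
        apply min_eq_right
        calc Nat.floor (((1 + xs l)/2) * (Nl k l:ℝ)) ≤ Nat.floor ((Nl k l:ℝ)) :=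
              Nat.floor_le_floor (by nlinarith [hNlposR l])
          _ = Nl k l := Nat.floor_natCast _
      have hfloor_le : (Kst l : ℝ) ≤ ((1 + xs l)/2) * (Nl k l:ℝ) := by
        rw [hfl]; exact Nat.floor_le (by positivity)
      have hfloor_gt : ((1 + xs l)/2) * (Nl k l:ℝ) < (Kst l:ℝ) + 1 := by
        rw [hfl]; exact Nat.lt_floor_add_one _
      have hNl := hNlposR l
      have expand : (2*(Kst l:ℝ) - (Nl k l:ℝ))/(Nl k l:ℝ) - xs l
          = (2*(Kst l:ℝ) - (Nl k l:ℝ) - xs l * (Nl k l:ℝ))/(Nl k l:ℝ) := by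
        field_simp
      rw [expand, abs_le]
      constructor
      · rw [← neg_div, div_le_div_iff_of_pos_right hNl]
        nlinarith [hfloor_gt]
      · rw [div_le_div_iff_of_pos_right hNl]
        nlinarith [hfloor_le]
    have hdist : dist (fun l => (2*(Kst l:ℝ) - (Nl k l:ℝ))/(Nl k l:ℝ)) xs < δ := by
      rw [dist_pi_lt_iff hδ]
      intro l
      rw [Real.dist_eq]
      have h2Nl : 2/(Nl k l:ℝ) < δ := by
        have hge : a0 * (Ntot k:ℝ) ≤ (Nl k l:ℝ) := by
          rw [hprop k l]
          exact mul_le_mul_of_nonneg_right (ha0le l) hNR.le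
        rw [div_lt_iff₀ (hNlposR l)]
        have h1' : 2 < (Ntot k:ℝ) * (a0 * δ) := by
          rw [div_lt_iff₀ (by positivity)] at h1
          linarith
        nlinarith [hδ, ha0pos, hNlposR l]
      exact lt_of_le_of_lt (hmudist l) h2Nl
    have hfclose := hδim hdist
    rw [Real.dist_eq] at hfclose
    have habs := abs_lt.mp hfclose
    linarith [hkey, habs.1, habs.2, h3]
  · intro b hb
    have hev2 : ∀ᶠ k in atTop, 1 ≤ Ntot k := hNinf.eventually_ge_atTop 1
    have hev3 : ∀ᶠ k in atTop, (n:ℝ) * Real.log ((Ntot k:ℝ)+1)/(Ntot k:ℝ) < b - S :=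
      hlogtend.eventually_lt_const (by linarith)
    filter_upwards [hev2, hev3] with k h2 h3
    have := (key k h2 (fun _ => 0) (fun l => Nat.zero_le _)).2
    linarith
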